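/- Let (X_1,Y_1),...,(X_n,Y_n) be i.i.d. copies of (X,Y) from the true model, and let Λ = ((λ_b),(f_b)) be a mixing measure with λ_b f_b(x) > 0 for all x and b. For each permutation π of {1,...,K} let L(π) = E[log(λ_{π(Y)} f_{π(Y)}(X))], assumed finite, and let Δ = L(id) − max_{π ≠ id} L(π). For each π, assume the centered log-moment-generating function ψ_π(s) = log E[exp( s( log(λ_{π(Y)} f_{π(Y)}(X)) − L(π) ) )] is finite for all s ∈ ℝ, set ψ*_π(t) = sup_{s∈ℝ}(st − ψ_π(s)), and let I = inf_π min( ψ*_π(Δ/3), ψ*_π(−Δ/3) ). If Δ > 0, I > 0, δ ∈ (0,1), and n ≥ ( K·log K + log(2/δ) ) / I, then the probability that the identity permutation is the unique maximizer over permutations π of the log-likelihood ℓ_n(π) = (1/n) Σ_{i=1}^n log(λ_{π(Y_i)} f_{π(Y_i)}(X_i)) is at least 1 − δ. In particular, Θ(K log K) labeled samples suffice to recover the true permutation with high probability. -/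

import Mathlib

open MeasureTheory ProbabilityTheory

/-- Law of the pair `(Xi, Yi)` determined by label law and conditional laws. -/
lemma map_pair_eq_mix {Ω : Type*} [MeasurableSpace Ω] (P : Measure Ω) [IsProbabilityMeasure P]
    {d K : ℕ} (lamstar : Fin K → ℝ) (fstar : Fin K → (Fin d → ℝ) → ℝ)
    (hlamstar_pos : ∀ k, 0 < lamstar k)
    (Xi : Ω → (Fin d → ℝ)) (Yi : Ω → Fin K)
    (hXm : Measurable Xi) (hYm : Measurable Yi)
    (hY_law : ∀ k, P {ω | Yi ω = k} = ENNReal.ofReal (lamstar k))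
    (hcond : ∀ k, Measure.map Xi (P[|{ω | Yi ω = k}])
      = volume.withDensity (fun x => ENNReal.ofReal (fstar k x))) :
    Measure.map (fun ω => (Xi ω, Yi ω)) P
      = ∑ k : Fin K, ENNReal.ofReal (lamstar k) •
          Measure.map (fun x => (x, k))
            (volume.withDensity (fun x => ENNReal.ofReal (fstar k x))) := by
  ext S hS
  have hpair : Measurable fun ω => (Xi ω, Yi ω) := hXm.prodMk hYm
  have hYk : ∀ k : Fin K, MeasurableSet {ω | Yi ω = k} := fun k =>
    hYm (measurableSet_singleton k)
  have hSk : ∀ k : Fin K, MeasurableSet ((fun x : Fin d → ℝ => (x, k)) ⁻¹' S) := fun k =>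
    hS.preimage (measurable_id.prodMk measurable_const)
  rw [Measure.map_apply hpair hS]
  have hpre : (fun ω => (Xi ω, Yi ω)) ⁻¹' S
      = ⋃ k, ({ω | Yi ω = k} ∩ Xi ⁻¹' ((fun x => (x, k)) ⁻¹' S)) := by
    ext ω
    simp only [Set.mem_preimage, Set.mem_iUnion, Set.mem_inter_iff, Set.mem_setOf_eq]
    constructor
    · intro h; exact ⟨Yi ω, rfl, h⟩
    · rintro ⟨k, hk, hx⟩; rw [← hk] at hx; exact hx
  have hdisj : Pairwise (Function.onFun Disjoint
      fun k => ({ω | Yi ω = k} ∩ Xi ⁻¹' ((fun x => (x, k)) ⁻¹' S))) := by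
    intro k k' hkk'
    refine Set.disjoint_left.2 ?_
    rintro ω ⟨hk, -⟩ ⟨hk', -⟩
    exact hkk' (hk.symm.trans hk')
  rw [hpre, measure_iUnion hdisj (fun k => (hYk k).inter (hXm (hSk k))), tsum_fintype]
  rw [Measure.coe_finset_sum, Finset.sum_apply]
  refine Finset.sum_congr rfl fun k _ => ?_
  have hterm : (volume.withDensity (fun x => ENNReal.ofReal (fstar k x)))
      ((fun x : Fin d → ℝ => (x, k)) ⁻¹' S)
      = (P {ω | Yi ω = k})⁻¹ * P ({ω | Yi ω = k} ∩ Xi ⁻¹' ((fun x => (x, k)) ⁻¹' S)) := by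
    rw [← hcond k, Measure.map_apply hXm (hSk k), cond_apply (hYk k)]
  rw [Measure.smul_apply, smul_eq_mul,
    Measure.map_apply measurable_prodMk_right hS, hterm, ← hY_law k, ← mul_assoc,
    ENNReal.mul_inv_cancel, one_mul]
  · rw [hY_law k]
    simpa using (hlamstar_pos k)
  · exact measure_ne_top P _

/-- Abstract limiting step: if `p ≤ exp (-(n(I-ε)))` for all small `ε > 0`, then
`p ≤ exp (-(nI))`. -/
lemma le_exp_of_forall_eps {p n I : ℝ} (hn : 1 ≤ n) (hI : 0 < I)
    (h : ∀ ε, 0 < ε → ε < I → p ≤ Real.exp (-(n * (I - ε)))) : p ≤ Real.exp (-(n * I)) := by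
  by_contra h'
  push_neg at h'
  have hp0 : 0 < p := lt_trans (Real.exp_pos _) h'
  have hlog : -(n * I) < Real.log p := (Real.lt_log_iff_exp_lt hp0).2 h'
  have hn0 : 0 < n := lt_of_lt_of_le zero_lt_one hn
  set ε : ℝ := min (I / 2) ((Real.log p + n * I) / (2 * n)) with hε
  have hεpos : 0 < ε := by
    apply lt_min (by linarith)
    apply div_pos (by linarith) (by linarith)
  have hεI : ε < I := lt_of_le_of_lt (min_le_left _ _) (by linarith)
  have hb := h ε hεpos hεI
  have hnε : n * ε ≤ (Real.log p + n * I) / 2 := by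
    have : ε ≤ (Real.log p + n * I) / (2 * n) := min_le_right _ _
    calc n * ε ≤ n * ((Real.log p + n * I) / (2 * n)) := by
          exact mul_le_mul_of_nonneg_left this hn0.le
      _ = (Real.log p + n * I) / 2 := by field_simp
  have hexp : -(n * (I - ε)) < Real.log p := by nlinarith
  have : p < p := by
    calc p ≤ Real.exp (-(n * (I - ε))) := hb
      _ < Real.exp (Real.log p) := Real.exp_lt_exp.2 hexp
      _ = p := Real.exp_log hp0
  exact lt_irrefl _ this

/-- **Corollary 1 (labeled sample complexity of the MLE).**
I.i.d. labeled pairs `(X i, Y i)` from the true model; a mixing measure `(lam, f)` with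
`lam b * f b x > 0` everywhere; `L π = E[log(lam_{π(Y)} f_{π(Y)}(X))]` (assumed integrable);
gap `Δ = L(id) - max_{π ≠ id} L(π) > 0`; centered log-mgfs `ψ π` (assumed finite for all `s`)
with Fenchel–Legendre duals `ψstar π`, and `I = inf_π min(ψ*_π(Δ/3), ψ*_π(-Δ/3)) > 0`.
If `δ ∈ (0,1)` and `n ≥ (K log K + log(2/δ)) / I`, then with probability at least `1 - δ`
the identity is the unique maximizer of the empirical log-likelihood over permutations. -/
theorem mle_sample_complexity
    {Ω : Type*} [MeasurableSpace Ω] (P : Measure Ω) [IsProbabilityMeasure P]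
    (d K n : ℕ) (hK : 2 ≤ K) (hn : 0 < n)
    -- true weights and class-conditional densities
    (lamstar : Fin K → ℝ) (fstar : Fin K → (Fin d → ℝ) → ℝ)
    (hlamstar_pos : ∀ k, 0 < lamstar k) (hlamstar_sum : ∑ k, lamstar k = 1)
    (hfstar_meas : ∀ k, Measurable (fstar k))
    (hfstar_nonneg : ∀ k x, 0 ≤ fstar k x)
    (hfstar_int : ∀ k, ∫ x, fstar k x = 1)
    -- i.i.d. labeled pairs from the true model
    (X : Fin n → Ω → (Fin d → ℝ)) (Y : Fin n → Ω → Fin K)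
    (hX_meas : ∀ i, Measurable (X i)) (hY_meas : ∀ i, Measurable (Y i))
    (hindep : iIndepFun (fun i ω => (X i ω, Y i ω)) P)
    (hY_law : ∀ i k, P {ω | Y i ω = k} = ENNReal.ofReal (lamstar k))
    (hcond_law : ∀ i k, Measure.map (X i) (P[|{ω | Y i ω = k}])
      = volume.withDensity (fun x => ENNReal.ofReal (fstar k x)))
    -- the mixing measure Λ with everywhere-positive component likelihoods
    (lam : Fin K → ℝ) (f : Fin K → (Fin d → ℝ) → ℝ)
    (hlam_pos : ∀ b, 0 < lam b) (hlam_sum : ∑ b, lam b = 1)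
    (hf_meas : ∀ b, Measurable (f b))
    (hf_nonneg : ∀ b x, 0 ≤ f b x) (hf_int : ∀ b, ∫ x, f b x = 1)
    (hpos : ∀ b x, 0 < lam b * f b x)
    -- expected log-likelihoods L(π), assumed finite
    (L : Equiv.Perm (Fin K) → ℝ)
    (hL_int : ∀ π : Equiv.Perm (Fin K), Integrable
      (fun ω => Real.log (lam (π (Y ⟨0, hn⟩ ω)) * f (π (Y ⟨0, hn⟩ ω)) (X ⟨0, hn⟩ ω))) P)
    (hL : ∀ π : Equiv.Perm (Fin K),
      L π = ∫ ω, Real.log (lam (π (Y ⟨0, hn⟩ ω)) * f (π (Y ⟨0, hn⟩ ω)) (X ⟨0, hn⟩ ω)) ∂P)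
    -- the gap Δ
    (Δ : ℝ) (hΔ : Δ = L 1 - ⨆ π : {π : Equiv.Perm (Fin K) // π ≠ 1}, L π.1)
    (hΔpos : 0 < Δ)
    -- centered log moment generating functions, assumed finite for all s
    (ψ : Equiv.Perm (Fin K) → ℝ → ℝ)
    (hψ_fin : ∀ (π : Equiv.Perm (Fin K)) (s : ℝ), Integrable
      (fun ω => Real.exp (s * (Real.log (lam (π (Y ⟨0, hn⟩ ω)) * f (π (Y ⟨0, hn⟩ ω)) (X ⟨0, hn⟩ ω)) - L π))) P)
    (hψ : ∀ (π : Equiv.Perm (Fin K)) (s : ℝ), ψ π s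
      = Real.log (∫ ω, Real.exp
          (s * (Real.log (lam (π (Y ⟨0, hn⟩ ω)) * f (π (Y ⟨0, hn⟩ ω)) (X ⟨0, hn⟩ ω)) - L π)) ∂P))
    -- Fenchel–Legendre duals and the rate I
    (ψstar : Equiv.Perm (Fin K) → ℝ → ℝ)
    (hψstar : ∀ π t, ψstar π t = ⨆ s : ℝ, (s * t - ψ π s))
    (I : ℝ)
    (hI : I = ⨅ π : Equiv.Perm (Fin K), min (ψstar π (Δ / 3)) (ψstar π (-(Δ / 3))))
    (hIpos : 0 < I)
    -- sample size requirement
    (δ : ℝ) (hδ : δ ∈ Set.Ioo (0 : ℝ) 1)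
    (hsize : ((K : ℝ) * Real.log K + Real.log (2 / δ)) / I ≤ (n : ℝ)) :
    1 - δ ≤ (P {ω | ∀ π : Equiv.Perm (Fin K), π ≠ 1 →
        (1 / (n : ℝ)) * ∑ i, Real.log (lam (π (Y i ω)) * f (π (Y i ω)) (X i ω))
          < (1 / (n : ℝ)) * ∑ i, Real.log (lam (Y i ω) * f (Y i ω) (X i ω))}).toReal := by
    classical
  set i0 : Fin n := ⟨0, hn⟩ with hi0
  -- the common law of the pairs
  set ν : Measure ((Fin d → ℝ) × Fin K) :=
    ∑ k : Fin K, ENNReal.ofReal (lamstar k) •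
      Measure.map (fun x => (x, k))
        (volume.withDensity (fun x => ENNReal.ofReal (fstar k x))) with hν
  have hmap : ∀ i, Measure.map (fun ω => (X i ω, Y i ω)) P = ν := fun i =>
    map_pair_eq_mix P lamstar fstar hlamstar_pos (X i) (Y i) (hX_meas i) (hY_meas i)
      (hY_law i) (hcond_law i)
  have hpair : ∀ i, Measurable fun ω => (X i ω, Y i ω) := fun i =>
    (hX_meas i).prodMk (hY_meas i)
  -- per-class log-likelihood functions on the product space
  have hh_meas : ∀ π : Equiv.Perm (Fin K),
      Measurable (fun p : (Fin d → ℝ) × Fin K => Real.log (lam (π p.2) * f (π p.2) p.1)) := by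
    intro π
    exact measurable_from_prod_countable_left
      (fun k => ((hf_meas (π k)).const_mul (lam (π k))).log)
  -- transfer of integrability and integrals to ν
  have hint_iff : ∀ (i : Fin n) (g : (Fin d → ℝ) × Fin K → ℝ), Measurable g →
      (Integrable (fun ω => g (X i ω, Y i ω)) P ↔ Integrable g ν) := by
    intro i g hg
    rw [← hmap i,
      integrable_map_measure hg.aestronglyMeasurable (hpair i).aemeasurable]
    exact Iff.rfl
  have hint_eq : ∀ (i : Fin n) (g : (Fin d → ℝ) × Fin K → ℝ), Measurable g →
      ∫ ω, g (X i ω, Y i ω) ∂P = ∫ p, g p ∂ν := by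
    intro i g hg
    rw [← hmap i, integral_map (hpair i).aemeasurable hg.aestronglyMeasurable]
  -- the centered summands
  set W : Equiv.Perm (Fin K) → Fin n → Ω → ℝ :=
    fun π i ω => Real.log (lam (π (Y i ω)) * f (π (Y i ω)) (X i ω)) - L π with hWdef
  have hW_meas : ∀ π i, Measurable (W π i) := fun π i =>
    ((hh_meas π).comp (hpair i)).sub measurable_const
  have hW_indep : ∀ π : Equiv.Perm (Fin K),
      iIndepFun (W π) P := by
    intro π
    exact hindep.comp
      (fun i => fun p : (Fin d → ℝ) × Fin K => Real.log (lam (π p.2) * f (π p.2) p.1) - L π)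
      (fun i => (hh_meas π).sub measurable_const)
  -- integrability of exp(s W) for every i
  have hexp_meas : ∀ (π : Equiv.Perm (Fin K)) (s : ℝ),
      Measurable (fun p : (Fin d → ℝ) × Fin K =>
        Real.exp (s * (Real.log (lam (π p.2) * f (π p.2) p.1) - L π))) := fun π s =>
    (((hh_meas π).sub measurable_const).const_mul s).exp
  have hint_exp : ∀ (π : Equiv.Perm (Fin K)) (s : ℝ) (i : Fin n),
      Integrable (fun ω => Real.exp (s * W π i ω)) P := by
    intro π s i
    exact (hint_iff i _ (hexp_meas π s)).2 ((hint_iff i0 _ (hexp_meas π s)).1 (hψ_fin π s))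
  -- ψ equals the cgf of each W π i
  have hcgf : ∀ (π : Equiv.Perm (Fin K)) (s : ℝ) (i : Fin n), cgf (W π i) P s = ψ π s := by
    intro π s i
    rw [hψ π s, cgf, mgf]
    congr 1
    rw [hint_eq i _ (hexp_meas π s), ← hint_eq i0 _ (hexp_meas π s)]
  -- nonnegativity of ψ (Jensen)
  have hψ0 : ∀ (π : Equiv.Perm (Fin K)) (s : ℝ), 0 ≤ ψ π s := by
    intro π s
    have hWint : Integrable (W π i0) P := (hL_int π).sub (integrable_const _)
    have hmean : ∫ ω, W π i0 ω ∂P = 0 := by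
      rw [hWdef]
      simp only []
      rw [integral_sub (hL_int π) (integrable_const _), integral_const]
      simp [← hL π]
    have hjensen : Real.exp (∫ ω, s * W π i0 ω ∂P) ≤ ∫ ω, Real.exp (s * W π i0 ω) ∂P := by
      have := ConvexOn.map_integral_le (μ := P) (f := fun ω => s * W π i0 ω)
        convexOn_exp Real.continuous_exp.continuousOn isClosed_univ
        (Filter.Eventually.of_forall fun _ => Set.mem_univ _)
        (hWint.const_mul s) ?_
      · exact this
      · exact hint_exp π s i0
    have h1 : (1 : ℝ) ≤ mgf (W π i0) P s := by
      rw [mgf]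
      have : ∫ ω, s * W π i0 ω ∂P = 0 := by
        rw [integral_const_mul, hmean, mul_zero]
      calc (1 : ℝ) = Real.exp (∫ ω, s * W π i0 ω ∂P) := by rw [this, Real.exp_zero]
        _ ≤ _ := hjensen
    have := Real.log_nonneg h1
    rwa [← cgf, hcgf π s i0] at this
  -- Chernoff bounds for the sums
  have hsum_apply : ∀ (π : Equiv.Perm (Fin K)) (ω : Ω),
      (∑ i, W π i) ω = ∑ i, W π i ω := by
    intro π ω; simp [Finset.sum_apply]
  have chernoff_up : ∀ (π : Equiv.Perm (Fin K)) (s : ℝ), 0 ≤ s →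
      (P {ω | (n : ℝ) * (Δ / 3) ≤ ∑ i, W π i ω}).toReal
        ≤ Real.exp (-(n : ℝ) * (s * (Δ / 3) - ψ π s)) := by
    intro π s hs
    have h_int : ∀ i ∈ Finset.univ, Integrable (fun ω => Real.exp (s * W π i ω)) P :=
      fun i _ => hint_exp π s i
    have hsum_int : Integrable (fun ω => Real.exp (s * (∑ i, W π i) ω)) P :=
      (hW_indep π).integrable_exp_mul_sum (fun i => hW_meas π i) h_int
    have hch := measure_ge_le_exp_cgf (X := ∑ i, W π i) (μ := P)
      ((n : ℝ) * (Δ / 3)) hs hsum_int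
    rw [(hW_indep π).cgf_sum (fun i => hW_meas π i) h_int] at hch
    have hset : {ω | (n : ℝ) * (Δ / 3) ≤ (∑ i, W π i) ω}
        = {ω | (n : ℝ) * (Δ / 3) ≤ ∑ i, W π i ω} := by
      ext ω; rw [Set.mem_setOf_eq, hsum_apply π ω]; rfl
    rw [hset] at hch
    refine hch.trans (le_of_eq ?_)
    congr 1
    have : ∑ i : Fin n, cgf (W π i) P s = (n : ℝ) * ψ π s := by
      rw [Finset.sum_congr rfl (fun i _ => hcgf π s i)]
      simp [Finset.sum_const, nsmul_eq_mul]
    rw [this]; ring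
  have chernoff_low : ∀ (π : Equiv.Perm (Fin K)) (s : ℝ), s ≤ 0 →
      (P {ω | ∑ i, W π i ω ≤ -((n : ℝ) * (Δ / 3))}).toReal
        ≤ Real.exp (-(n : ℝ) * (s * (-(Δ / 3)) - ψ π s)) := by
    intro π s hs
    have h_int : ∀ i ∈ Finset.univ, Integrable (fun ω => Real.exp (s * W π i ω)) P :=
      fun i _ => hint_exp π s i
    have hsum_int : Integrable (fun ω => Real.exp (s * (∑ i, W π i) ω)) P :=
      (hW_indep π).integrable_exp_mul_sum (fun i => hW_meas π i) h_int
    have hch := measure_le_le_exp_cgf (X := ∑ i, W π i) (μ := P)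
      (-((n : ℝ) * (Δ / 3))) hs hsum_int
    rw [(hW_indep π).cgf_sum (fun i => hW_meas π i) h_int] at hch
    have hset : {ω | (∑ i, W π i) ω ≤ -((n : ℝ) * (Δ / 3))}
        = {ω | ∑ i, W π i ω ≤ -((n : ℝ) * (Δ / 3))} := by
      ext ω; rw [Set.mem_setOf_eq, hsum_apply π ω]; rfl
    rw [hset] at hch
    refine hch.trans (le_of_eq ?_)
    congr 1
    have : ∑ i : Fin n, cgf (W π i) P s = (n : ℝ) * ψ π s := by
      rw [Finset.sum_congr rfl (fun i _ => hcgf π s i)]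
      simp [Finset.sum_const, nsmul_eq_mul]
    rw [this]; ring
  -- rate bounds via the Fenchel–Legendre dual
  have hn1 : (1 : ℝ) ≤ (n : ℝ) := by exact_mod_cast hn
  have hIle : ∀ π : Equiv.Perm (Fin K),
      I ≤ min (ψstar π (Δ / 3)) (ψstar π (-(Δ / 3))) := by
    intro π
    rw [hI]
    exact ciInf_le (Set.Finite.bddBelow (Set.finite_range _)) π
  have hup : ∀ π : Equiv.Perm (Fin K),
      (P {ω | (n : ℝ) * (Δ / 3) ≤ ∑ i, W π i ω}).toReal ≤ Real.exp (-((n : ℝ) * I)) := by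
    intro π
    apply le_exp_of_forall_eps hn1 hIpos
    intro ε hε hεI
    have h1 : I - ε < ψstar π (Δ / 3) :=
      lt_of_lt_of_le (by linarith) ((hIle π).trans (min_le_left _ _))
    rw [hψstar] at h1
    obtain ⟨s, hsgt⟩ := exists_lt_of_lt_ciSup h1
    have hIε : 0 < I - ε := by linarith
    have hs0 : 0 ≤ s := by
      by_contra hneg
      push_neg at hneg
      have h2 : s * (Δ / 3) ≤ 0 := mul_nonpos_of_nonpos_of_nonneg hneg.le (by linarith)
      have := hψ0 π s
      nlinarith
    refine (chernoff_up π s hs0).trans ?_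
    rw [Real.exp_le_exp]
    have : I - ε ≤ s * (Δ / 3) - ψ π s := hsgt.le
    nlinarith
  have hlow : ∀ π : Equiv.Perm (Fin K),
      (P {ω | ∑ i, W π i ω ≤ -((n : ℝ) * (Δ / 3))}).toReal
        ≤ Real.exp (-((n : ℝ) * I)) := by
    intro π
    apply le_exp_of_forall_eps hn1 hIpos
    intro ε hε hεI
    have h1 : I - ε < ψstar π (-(Δ / 3)) :=
      lt_of_lt_of_le (by linarith) ((hIle π).trans (min_le_right _ _))
    rw [hψstar] at h1
    obtain ⟨s, hsgt⟩ := exists_lt_of_lt_ciSup h1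
    have hIε : 0 < I - ε := by linarith
    have hs0 : s ≤ 0 := by
      by_contra hneg
      push_neg at hneg
      have h2 : s * (-(Δ / 3)) ≤ 0 := by nlinarith
      have := hψ0 π s
      nlinarith
    refine (chernoff_low π s hs0).trans ?_
    rw [Real.exp_le_exp]
    have : I - ε ≤ s * (-(Δ / 3)) - ψ π s := hsgt.le
    nlinarith
  -- events and measurability
  have hsum_meas : ∀ π : Equiv.Perm (Fin K), Measurable (fun ω =>
      (1 / (n : ℝ)) * ∑ i, Real.log (lam (π (Y i ω)) * f (π (Y i ω)) (X i ω))) := by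
    intro π
    exact (Finset.measurable_sum _ (fun i _ => (hh_meas π).comp (hpair i))).const_mul _
  have hone_meas : Measurable (fun ω =>
      (1 / (n : ℝ)) * ∑ i, Real.log (lam (Y i ω) * f (Y i ω) (X i ω))) := hsum_meas 1
  set E : Set Ω := {ω | ∀ π : Equiv.Perm (Fin K), π ≠ 1 →
      (1 / (n : ℝ)) * ∑ i, Real.log (lam (π (Y i ω)) * f (π (Y i ω)) (X i ω))
        < (1 / (n : ℝ)) * ∑ i, Real.log (lam (Y i ω) * f (Y i ω) (X i ω))} with hE
  have hE_meas : MeasurableSet E := by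
    rw [hE]
    rw [Set.setOf_forall]
    refine MeasurableSet.iInter fun π => ?_
    by_cases hπ : π = 1
    · simp [hπ]
    · simp only [hπ, ne_eq, not_false_eq_true, forall_true_left]
      exact measurableSet_lt (hsum_meas π) hone_meas
  -- inclusion of the complement in the union of the tail events
  have hsub : Eᶜ ⊆ ⋃ π : Equiv.Perm (Fin K),
      ({ω | (n : ℝ) * (Δ / 3) ≤ ∑ i, W π i ω} ∪ {ω | ∑ i, W π i ω ≤ -((n : ℝ) * (Δ / 3))}) := by
    intro ω hω
    by_contra hnot
    simp only [Set.mem_iUnion, Set.mem_union, Set.mem_setOf_eq, not_exists, not_or,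
      not_le] at hnot
    apply hω
    intro π hπ
    have hn0 : (0 : ℝ) < (n : ℝ) := by exact_mod_cast hn
    have hsplit : ∀ π' : Equiv.Perm (Fin K), ∑ i, W π' i ω
        = (∑ i, Real.log (lam (π' (Y i ω)) * f (π' (Y i ω)) (X i ω))) - (n : ℝ) * L π' := by
      intro π'
      rw [hWdef]
      rw [Finset.sum_sub_distrib, Finset.sum_const, Finset.card_univ, Fintype.card_fin,
        nsmul_eq_mul]
    have h2 := (hnot π).1
    have h1 := (hnot 1).2
    rw [hsplit π] at h2
    rw [hsplit 1] at h1
    have hone : ∑ i, Real.log (lam ((1 : Equiv.Perm (Fin K)) (Y i ω))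
        * f ((1 : Equiv.Perm (Fin K)) (Y i ω)) (X i ω))
        = ∑ i, Real.log (lam (Y i ω) * f (Y i ω) (X i ω)) := by simp
    rw [hone] at h1
    have hLle : L π ≤ L 1 - Δ := by
      have hle : L π ≤ ⨆ π' : {π' : Equiv.Perm (Fin K) // π' ≠ 1}, L π'.1 :=
        le_ciSup (f := fun π' : {π' : Equiv.Perm (Fin K) // π' ≠ 1} => L π'.1)
          (Set.Finite.bddAbove (Set.finite_range _)) ⟨π, hπ⟩
      linarith [hΔ]
    have hS : (∑ i, Real.log (lam (π (Y i ω)) * f (π (Y i ω)) (X i ω)))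
        < ∑ i, Real.log (lam (Y i ω) * f (Y i ω) (X i ω)) := by nlinarith
    exact mul_lt_mul_of_pos_left hS (by positivity)
  -- union bound
  have htermbd : ∀ π : Equiv.Perm (Fin K),
      (P ({ω | (n : ℝ) * (Δ / 3) ≤ ∑ i, W π i ω}
        ∪ {ω | ∑ i, W π i ω ≤ -((n : ℝ) * (Δ / 3))})).toReal
        ≤ 2 * Real.exp (-((n : ℝ) * I)) := by
    intro π
    have hu := measure_union_le (μ := P) {ω | (n : ℝ) * (Δ / 3) ≤ ∑ i, W π i ω}
      {ω | ∑ i, W π i ω ≤ -((n : ℝ) * (Δ / 3))}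
    have h1 : (P ({ω | (n : ℝ) * (Δ / 3) ≤ ∑ i, W π i ω}
        ∪ {ω | ∑ i, W π i ω ≤ -((n : ℝ) * (Δ / 3))})).toReal
        ≤ (P {ω | (n : ℝ) * (Δ / 3) ≤ ∑ i, W π i ω}).toReal
          + (P {ω | ∑ i, W π i ω ≤ -((n : ℝ) * (Δ / 3))}).toReal := by
      rw [← ENNReal.toReal_add (measure_ne_top _ _) (measure_ne_top _ _)]
      exact ENNReal.toReal_mono
        (ENNReal.add_ne_top.2 ⟨measure_ne_top _ _, measure_ne_top _ _⟩) hu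
    have := hup π
    have := hlow π
    linarith
  have hPEc : (P Eᶜ).toReal ≤ (K.factorial : ℝ) * (2 * Real.exp (-((n : ℝ) * I))) := by
    have hle1 : P Eᶜ ≤ ∑ π : Equiv.Perm (Fin K), P
        ({ω | (n : ℝ) * (Δ / 3) ≤ ∑ i, W π i ω}
          ∪ {ω | ∑ i, W π i ω ≤ -((n : ℝ) * (Δ / 3))}) := by
      refine (measure_mono hsub).trans ?_
      refine (measure_iUnion_le _).trans (le_of_eq (tsum_fintype _))
    have hfin : (∑ π : Equiv.Perm (Fin K), P
        ({ω | (n : ℝ) * (Δ / 3) ≤ ∑ i, W π i ω}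
          ∪ {ω | ∑ i, W π i ω ≤ -((n : ℝ) * (Δ / 3))})) ≠ ⊤ := by
      refine (ENNReal.sum_lt_top.2 fun π _ => ?_).ne
      exact measure_lt_top _ _
    calc (P Eᶜ).toReal ≤ (∑ π : Equiv.Perm (Fin K), P
        ({ω | (n : ℝ) * (Δ / 3) ≤ ∑ i, W π i ω}
          ∪ {ω | ∑ i, W π i ω ≤ -((n : ℝ) * (Δ / 3))})).toReal :=
        ENNReal.toReal_mono hfin hle1
      _ = ∑ π : Equiv.Perm (Fin K), (P
        ({ω | (n : ℝ) * (Δ / 3) ≤ ∑ i, W π i ω}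
          ∪ {ω | ∑ i, W π i ω ≤ -((n : ℝ) * (Δ / 3))})).toReal :=
        ENNReal.toReal_sum (fun π _ => measure_ne_top _ _)
      _ ≤ ∑ _π : Equiv.Perm (Fin K), 2 * Real.exp (-((n : ℝ) * I)) :=
        Finset.sum_le_sum (fun π _ => htermbd π)
      _ = (K.factorial : ℝ) * (2 * Real.exp (-((n : ℝ) * I))) := by
        rw [Finset.sum_const, Finset.card_univ, Fintype.card_perm, Fintype.card_fin,
          nsmul_eq_mul]
  -- final numeric estimate
  have hKpos : (0 : ℝ) < (K : ℝ) := by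
    have : (0 : ℕ) < K := lt_of_lt_of_le (by norm_num) hK
    exact_mod_cast this
  have hnum : (K.factorial : ℝ) * (2 * Real.exp (-((n : ℝ) * I))) ≤ δ := by
    obtain ⟨hδ0, hδ1⟩ := hδ
    have h1 : (K.factorial : ℝ) ≤ (K : ℝ) ^ K := by exact_mod_cast Nat.factorial_le_pow K
    have h2 : (K : ℝ) * Real.log K + Real.log (2 / δ) ≤ (n : ℝ) * I := by
      rw [div_le_iff₀ hIpos] at hsize; linarith
    have h3 : Real.exp (-((n : ℝ) * I))
        ≤ Real.exp (-((K : ℝ) * Real.log K)) * Real.exp (-Real.log (2 / δ)) := by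
      rw [← Real.exp_add]
      apply Real.exp_le_exp.2
      linarith
    have h4 : Real.exp (-((K : ℝ) * Real.log K)) = ((K : ℝ) ^ K)⁻¹ := by
      rw [Real.exp_neg]
      congr 1
      rw [Real.exp_nat_mul, Real.exp_log hKpos]
    have h5 : Real.exp (-Real.log (2 / δ)) = δ / 2 := by
      rw [Real.exp_neg, Real.exp_log (by positivity), inv_div]
    have hexp_nonneg : (0 : ℝ) ≤ Real.exp (-((n : ℝ) * I)) := (Real.exp_pos _).le
    have hKK : (0 : ℝ) < (K : ℝ) ^ K := by positivity
    have hfac_pos : (0 : ℝ) < (K.factorial : ℝ) := by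
      exact_mod_cast K.factorial_pos
    calc (K.factorial : ℝ) * (2 * Real.exp (-((n : ℝ) * I)))
        ≤ (K : ℝ) ^ K * (2 * (((K : ℝ) ^ K)⁻¹ * (δ / 2))) := by
          rw [← h4, ← h5] at *
          have hb : Real.exp (-((n : ℝ) * I))
              ≤ Real.exp (-((K : ℝ) * Real.log K)) * Real.exp (-Real.log (2 / δ)) := h3
          nlinarith [Real.exp_pos (-((K : ℝ) * Real.log K)),
            Real.exp_pos (-Real.log (2 / δ))]
      _ = δ := by field_simp
  have hadd : (P E).toReal + (P Eᶜ).toReal = 1 := by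
    rw [← ENNReal.toReal_add (measure_ne_top _ _) (measure_ne_top _ _),
      prob_add_prob_compl hE_meas, ENNReal.toReal_one]
  linarith
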